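/- Let ψ : ℕ → ℝ be a nonnegative sequence with Σ_{k=1}^∞ k·ψ(k) < ∞, let β ∈ ℝ and n ∈ ℕ (n ≥ 1). Then Σ_{k=n}^∞ ψ(k) − (π/n)·Σ_{k=1}^∞ k·ψ(k+n) ≤ inf_{λ∈ℝ} sup_{t∈ℝ} |Ψ_{β,n}(t) − λ| ≤ Σ_{k=n}^∞ ψ(k). -/

import Mathlib

open MeasureTheory Real Filter

noncomputable section

/-- The kernel `Ψ_{β,n}(t) = Σ_{k=n}^∞ ψ(k) cos(k t - βπ/2)`. -/
def PsiKerN (ψ : ℕ → ℝ) (β : ℝ) (n : ℕ) (t : ℝ) : ℝ :=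
  ∑' k : ℕ, ψ (k + n) * Real.cos (((k + n : ℕ) : ℝ) * t - β * π / 2)

lemma one_sub_abs_le_cos (x : ℝ) : 1 - |x| ≤ Real.cos x := by
  rcases le_or_gt |x| 2 with h | h
  · have h1 : 1 - x ^ 2 / 2 ≤ Real.cos x := Real.one_sub_sq_div_two_le_cos
    have h2 : x ^ 2 / 2 ≤ |x| := by
      have : x ^ 2 = |x| ^ 2 := (sq_abs x).symm
      nlinarith [abs_nonneg x]
    linarith
  · have := Real.neg_one_le_cos x
    linarith

/-- Two-sided bound for `inf_{λ∈ℝ} ‖Ψ_{β,n} - λ‖_C`. -/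
theorem PsiKerN_inf_norm_bounds (ψ : ℕ → ℝ) (hψ : ∀ k, 0 ≤ ψ k)
    (hsum : Summable (fun k : ℕ => (k : ℝ) * ψ k)) (β : ℝ) (n : ℕ) (hn : 1 ≤ n) :
    (∑' k : ℕ, ψ (k + n)) - (π / (n : ℝ)) * (∑' k : ℕ, ((k : ℝ) + 1) * ψ (k + 1 + n)) ≤
        (⨅ lam : ℝ, ⨆ t : ℝ, |PsiKerN ψ β n t - lam|) ∧
      (⨅ lam : ℝ, ⨆ t : ℝ, |PsiKerN ψ β n t - lam|) ≤ ∑' k : ℕ, ψ (k + n) := by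
  have hπ : (0:ℝ) < π := Real.pi_pos
  have hn0 : (0:ℝ) < (n:ℝ) := by exact_mod_cast hn
  set c : ℝ := β * π / 2 with hc
  -- summability facts
  have hinj : Function.Injective (fun k : ℕ => k + n) := add_left_injective n
  have hsum' : Summable (fun k : ℕ => ((k + n : ℕ) : ℝ) * ψ (k + n)) :=
    hsum.comp_injective hinj
  have hψn : Summable (fun k : ℕ => ψ (k + n)) := by
    apply Summable.of_nonneg_of_le (fun k => hψ _) _ hsum'
    intro k
    have h1 : (1:ℝ) ≤ ((k + n : ℕ) : ℝ) := by
      exact_mod_cast Nat.one_le_iff_ne_zero.mpr (by omega)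
    nlinarith [hψ (k + n)]
  have hkψn : Summable (fun k : ℕ => (k : ℝ) * ψ (k + n)) := by
    apply Summable.of_nonneg_of_le (fun k => mul_nonneg (Nat.cast_nonneg k) (hψ _)) _ hsum'
    intro k
    have : (k:ℝ) ≤ ((k + n : ℕ) : ℝ) := by push_cast; linarith
    nlinarith [hψ (k + n)]
  -- termwise summability of the kernel
  have hterm : ∀ t : ℝ, Summable (fun k : ℕ => ψ (k + n) * Real.cos (((k + n : ℕ) : ℝ) * t - c)) := by
    intro t
    apply Summable.of_norm_bounded hψn
    intro k
    rw [Real.norm_eq_abs, abs_mul, abs_of_nonneg (hψ _)]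
    nlinarith [abs_cos_le_one (((k + n : ℕ) : ℝ) * t - c), hψ (k + n),
      abs_nonneg (Real.cos (((k + n : ℕ) : ℝ) * t - c))]
  set S0 : ℝ := ∑' k : ℕ, ψ (k + n) with hS0
  set S1 : ℝ := ∑' k : ℕ, (k : ℝ) * ψ (k + n) with hS1
  -- the sup is bounded by S0
  have hbound : ∀ t : ℝ, |PsiKerN ψ β n t| ≤ S0 := by
    intro t
    have h1 : |PsiKerN ψ β n t| ≤ ∑' k : ℕ, |ψ (k + n) * Real.cos (((k + n : ℕ) : ℝ) * t - c)| := by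
      simpa only [Real.norm_eq_abs, PsiKerN, hc] using
        norm_tsum_le_tsum_norm (f := fun k : ℕ => ψ (k + n) * Real.cos (((k + n : ℕ) : ℝ) * t - c))
          ((hterm t).abs)
    refine h1.trans (Summable.tsum_le_tsum ?_ (hterm t).abs hψn)
    intro k
    rw [abs_mul, abs_of_nonneg (hψ _)]
    nlinarith [abs_cos_le_one (((k + n : ℕ) : ℝ) * t - c), hψ (k + n),
      abs_nonneg (Real.cos (((k + n : ℕ) : ℝ) * t - c))]
  have hbddA : ∀ lam : ℝ, BddAbove (Set.range fun t : ℝ => |PsiKerN ψ β n t - lam|) := by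
    intro lam
    refine ⟨S0 + |lam|, ?_⟩
    rintro x ⟨t, rfl⟩
    calc |PsiKerN ψ β n t - lam| ≤ |PsiKerN ψ β n t| + |lam| := abs_sub _ _
      _ ≤ S0 + |lam| := by linarith [hbound t]
  -- key evaluation lemma: if n*u = c + θ - 2π*r, then Ψ(u) is controlled
  have hkey : ∀ (u : ℝ) (r : ℤ), (n:ℝ) * u = c - r * (2 * π) → |u| ≤ π / n →
      S0 - (π / n) * S1 ≤ PsiKerN ψ β n u := by
    intro u r hu habs
    have heval : ∀ k : ℕ, Real.cos (((k + n : ℕ) : ℝ) * u - c) = Real.cos ((k:ℝ) * u) := by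
      intro k
      have : ((k + n : ℕ) : ℝ) * u - c = (k:ℝ) * u - r * (2 * π) := by
        push_cast; nlinarith [hu]
      rw [this, Real.cos_sub_int_mul_two_pi]
    have hterm2 : ∀ k : ℕ, ψ (k + n) - (π / n) * ((k:ℝ) * ψ (k + n)) ≤
        ψ (k + n) * Real.cos (((k + n : ℕ) : ℝ) * u - c) := by
      intro k
      rw [heval k]
      have hcos : 1 - (k:ℝ) * (π / n) ≤ Real.cos ((k:ℝ) * u) := by
        have h1 : 1 - |(k:ℝ) * u| ≤ Real.cos ((k:ℝ) * u) := one_sub_abs_le_cos _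
        have h2 : |(k:ℝ) * u| ≤ (k:ℝ) * (π / n) := by
          rw [abs_mul, Nat.abs_cast]
          exact mul_le_mul_of_nonneg_left habs (Nat.cast_nonneg k)
        linarith
      nlinarith [hψ (k + n)]
    have := Summable.tsum_le_tsum hterm2 ((hψn.sub (hkψn.mul_left (π / n)))) (hterm u)
    calc S0 - (π / n) * S1
        = ∑' k : ℕ, (ψ (k + n) - (π / n) * ((k:ℝ) * ψ (k + n))) := by
          rw [Summable.tsum_sub hψn (hkψn.mul_left (π / n)), tsum_mul_left]
      _ ≤ PsiKerN ψ β n u := by simpa [PsiKerN, hc] using this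
  have hkey' : ∀ (u : ℝ) (r : ℤ), (n:ℝ) * u = c + π - r * (2 * π) → |u| ≤ π / n →
      PsiKerN ψ β n u ≤ -(S0 - (π / n) * S1) := by
    intro u r hu habs
    have heval : ∀ k : ℕ, Real.cos (((k + n : ℕ) : ℝ) * u - c) = -Real.cos ((k:ℝ) * u) := by
      intro k
      have : ((k + n : ℕ) : ℝ) * u - c = ((k:ℝ) * u + π) - r * (2 * π) := by
        push_cast; nlinarith [hu]
      rw [this, Real.cos_sub_int_mul_two_pi, Real.cos_add_pi]
    have hterm2 : ∀ k : ℕ, ψ (k + n) * Real.cos (((k + n : ℕ) : ℝ) * u - c) ≤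
        -(ψ (k + n) - (π / n) * ((k:ℝ) * ψ (k + n))) := by
      intro k
      rw [heval k]
      have hcos : 1 - (k:ℝ) * (π / n) ≤ Real.cos ((k:ℝ) * u) := by
        have h1 : 1 - |(k:ℝ) * u| ≤ Real.cos ((k:ℝ) * u) := one_sub_abs_le_cos _
        have h2 : |(k:ℝ) * u| ≤ (k:ℝ) * (π / n) := by
          rw [abs_mul, Nat.abs_cast]
          exact mul_le_mul_of_nonneg_left habs (Nat.cast_nonneg k)
        linarith
      nlinarith [hψ (k + n)]
    have := Summable.tsum_le_tsum hterm2 (hterm u) ((hψn.sub (hkψn.mul_left (π / n))).neg)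
    calc PsiKerN ψ β n u
        ≤ ∑' k : ℕ, -(ψ (k + n) - (π / n) * ((k:ℝ) * ψ (k + n))) := by
          simpa [PsiKerN, hc] using this
      _ = -(S0 - (π / n) * S1) := by
          rw [tsum_neg, Summable.tsum_sub hψn (hkψn.mul_left (π / n)), tsum_mul_left]
  -- choose the two test points
  set r0 : ℤ := round (c / (2 * π)) with hr0
  set t0 : ℝ := (c - r0 * (2 * π)) / n with ht0
  have hnt0 : (n:ℝ) * t0 = c - r0 * (2 * π) := by
    rw [ht0]; field_simp
  have ht0abs : |t0| ≤ π / n := by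
    rw [ht0, abs_div, abs_of_pos hn0, div_le_div_iff_of_pos_right hn0]
    have h1 : |c / (2 * π) - r0| ≤ 1 / 2 := abs_sub_round _
    have h2 : c - r0 * (2 * π) = (c / (2 * π) - r0) * (2 * π) := by field_simp
    rw [h2, abs_mul, abs_of_pos (by linarith : (0:ℝ) < 2 * π)]
    nlinarith
  set r1 : ℤ := round ((c + π) / (2 * π)) with hr1
  set t1 : ℝ := (c + π - r1 * (2 * π)) / n with ht1
  have hnt1 : (n:ℝ) * t1 = c + π - r1 * (2 * π) := by
    rw [ht1]; field_simp
  have ht1abs : |t1| ≤ π / n := by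
    rw [ht1, abs_div, abs_of_pos hn0, div_le_div_iff_of_pos_right hn0]
    have h1 : |(c + π) / (2 * π) - r1| ≤ 1 / 2 := abs_sub_round _
    have h2 : c + π - r1 * (2 * π) = ((c + π) / (2 * π) - r1) * (2 * π) := by field_simp
    rw [h2, abs_mul, abs_of_pos (by linarith : (0:ℝ) < 2 * π)]
    nlinarith
  have hlow0 : S0 - (π / n) * S1 ≤ PsiKerN ψ β n t0 := hkey t0 r0 hnt0 ht0abs
  have hlow1 : PsiKerN ψ β n t1 ≤ -(S0 - (π / n) * S1) := hkey' t1 r1 hnt1 ht1abs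
  -- rewrite S1 as the shifted sum in the statement
  have hS1shift : S1 = ∑' k : ℕ, ((k : ℝ) + 1) * ψ (k + 1 + n) := by
    rw [hS1, Summable.tsum_eq_zero_add hkψn]
    push_cast
    rw [zero_mul, zero_add]
  constructor
  · rw [← hS1shift]
    apply le_ciInf
    intro lam
    have h0 : PsiKerN ψ β n t0 - lam ≤ |PsiKerN ψ β n t0 - lam| := le_abs_self _
    have h1 : -(PsiKerN ψ β n t1 - lam) ≤ |PsiKerN ψ β n t1 - lam| := neg_le_abs _
    have hs0 : |PsiKerN ψ β n t0 - lam| ≤ ⨆ t : ℝ, |PsiKerN ψ β n t - lam| :=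
      le_ciSup (hbddA lam) t0
    have hs1 : |PsiKerN ψ β n t1 - lam| ≤ ⨆ t : ℝ, |PsiKerN ψ β n t - lam| :=
      le_ciSup (hbddA lam) t1
    linarith
  · have hle0 : (⨅ lam : ℝ, ⨆ t : ℝ, |PsiKerN ψ β n t - lam|) ≤ ⨆ t : ℝ, |PsiKerN ψ β n t - 0| := by
      apply ciInf_le
      refine ⟨0, ?_⟩
      rintro x ⟨lam, rfl⟩
      exact le_trans (abs_nonneg _) (le_ciSup (hbddA lam) 0)
    refine hle0.trans (ciSup_le fun t => ?_)
    simpa using hbound t
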